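/- arXiv:1906.07240 — 5 statements merged into one kernel-verified Lean document; each statement's English description precedes it below -/
import Mathlib

section
/- Let q be even and α_0, α_1, α_2 ∈ F_q with α_0 α_1 ≠ 0. Then the quartic X^4 + α_2 X^2 + α_1 X + α_0 has exactly one root in F_q if and only if the cubic X^3 + α_2 X + α_1 is irreducible over F_q. -/
open Polynomial

theorem leonard_williams_quartic (F : Type*) [Field F] [Fintype F]
    (h2 : ringChar F = 2) (α0 α1 α2 : F) (h : α0 * α1 ≠ 0) :
    (∃! x : F, x ^ 4 + α2 * x ^ 2 + α1 * x + α0 = 0) ↔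
      Irreducible (X ^ 3 + C α2 * X + C α1 : F[X]) := by
  haveI : CharP F 2 := h2 ▸ ringChar.charP F
  have hα0 : α0 ≠ 0 := fun h0 => h (by rw [h0, zero_mul])
  have hα1 : α1 ≠ 0 := fun h1 => h (by rw [h1, mul_zero])
  -- the additive map L
  set L : F →+ F :=
    { toFun := fun x => x ^ 4 + α2 * x ^ 2 + α1 * x
      map_zero' := by ring
      map_add' := by
        intro x y
        haveI : Fact (Nat.Prime 2) := ⟨Nat.prime_two⟩
        have e2 : (x + y) ^ 2 = x ^ 2 + y ^ 2 := add_pow_char x y 2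
        have e4 : (x + y) ^ 4 = x ^ 4 + y ^ 4 := by
          have h44 : (x + y) ^ 4 = ((x + y) ^ 2) ^ 2 := by ring
          rw [h44, e2, add_pow_char _ _ 2]
          ring
        simp only [e2, e4]
        ring } with hL
  have hLdef : ∀ x : F, L x = x ^ 4 + α2 * x ^ 2 + α1 * x := fun x => rfl
  -- quartic roots are preimages of α0
  have hroot : ∀ x : F, x ^ 4 + α2 * x ^ 2 + α1 * x + α0 = 0 ↔ L x = α0 := by
    intro x
    rw [hLdef]
    constructor
    · intro hx
      rw [← CharTwo.neg_eq (R := F) α0]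
      exact eq_neg_of_add_eq_zero_left hx
    · intro hx
      rw [hx]
      exact CharTwo.add_self_eq_zero α0
  have hfact : ∀ x : F, L x = x * (x ^ 3 + α2 * x + α1) := by
    intro x; rw [hLdef]; ring
  -- key condition: the cubic has no nonzero root (hence no root at all)
  have key : (∃! x : F, x ^ 4 + α2 * x ^ 2 + α1 * x + α0 = 0) ↔
      ∀ x : F, x ≠ 0 → x ^ 3 + α2 * x + α1 ≠ 0 := by
    constructor
    · rintro ⟨x0, hx0, hx0u⟩ x hx hcub
      have hLx : L x = 0 := by rw [hfact, hcub, mul_zero]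
      have h1 : L (x0 + x) = α0 := by
        rw [map_add, hLx, add_zero, ← hroot] at *
        exact hx0
      have h2' : x0 + x = x0 := hx0u _ ((hroot _).mpr h1)
      exact hx (by linear_combination h2' )
    · intro hk
      have hinj : Function.Injective L := by
        rw [injective_iff_map_eq_zero]
        intro a ha
        by_contra hne
        rw [hfact] at ha
        rcases mul_eq_zero.mp ha with h' | h'
        · exact hne h'
        · exact hk a hne h'
      have hsurj : Function.Surjective L := Finite.injective_iff_surjective.mp hinj
      obtain ⟨x0, hx0⟩ := hsurj α0
      exact ⟨x0, (hroot _).mpr hx0, fun y hy => hinj (by rw [hx0, ← hroot]; exact hy)⟩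
  rw [key]
  -- now the cubic side
  set g : F[X] := X ^ 3 + C α2 * X + C α1 with hg
  have hgmonic : g.Monic := by
    unfold g
    monicity!
  have hgdeg : g.natDegree = 3 := by
    unfold g
    compute_degree!
  have hg0 : g ≠ 0 := hgmonic.ne_zero
  have heval : ∀ x : F, g.eval x = x ^ 3 + α2 * x + α1 := by
    intro x; simp [hg]
  rw [hgmonic.irreducible_iff_roots_eq_zero_of_degree_le_three (by omega) (by omega)]
  rw [Multiset.eq_zero_iff_forall_notMem]
  constructor
  · intro hk x hmem
    have hx0 : x ^ 3 + α2 * x + α1 = 0 := by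
      have := (mem_roots hg0).mp hmem
      rwa [IsRoot, heval] at this
    rcases eq_or_ne x 0 with rfl | hx
    · exact hα1 (by simpa using hx0)
    · exact hk x hx hx0
  · intro hnr x hx hcub
    exact hnr x ((mem_roots hg0).mpr (by rw [IsRoot, heval]; exact hcub))
end

section
/- Let q be a power of 2, r a positive integer, and h(X) ∈ F_{q^2}[X]. Then f(X) = X^r h(X^{q-1}) is a permutation polynomial of F_{q^2} if and only if gcd(r, q-1) = 1 and X^r h(X)^{q-1} permutes the set μ_{q+1} = {x ∈ F_{q^2} : x^{q+1} = 1}. -/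
theorem pp_criterion_mu (n : ℕ) (hn : 0 < n) (q : ℕ) (hq : q = 2 ^ n)
    (E : Type*) [Field E] [Fintype E] (hE : Fintype.card E = q ^ 2)
    (r : ℕ) (hr : 0 < r) (h : Polynomial E) :
    Function.Bijective (fun x : E => x ^ r * h.eval (x ^ (q - 1))) ↔
      (Nat.gcd r (q - 1) = 1 ∧
        Set.BijOn (fun x : E => x ^ r * (h.eval x) ^ (q - 1))
          {x : E | x ^ (q + 1) = 1} {x : E | x ^ (q + 1) = 1}) := by
  classical
  set f : E → E := fun x => x ^ r * h.eval (x ^ (q - 1)) with hf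
  set g : E → E := fun x => x ^ r * (h.eval x) ^ (q - 1) with hg
  set μ : Set E := {x : E | x ^ (q + 1) = 1} with hμ
  -- basic numerics
  have hq2 : 2 ≤ q := by
    subst hq
    calc 2 = 2 ^ 1 := rfl
    _ ≤ 2 ^ n := Nat.pow_le_pow_right (by norm_num) hn
  have hqeven : 2 ∣ q := by subst hq; exact dvd_pow_self 2 hn.ne'
  have hmul : (q - 1) * (q + 1) = q ^ 2 - 1 := by
    have h2 : 1 ≤ q ^ 2 := Nat.one_le_pow _ _ (by omega)
    zify [h2, (by omega : 1 ≤ q)]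
    ring
  -- Fermat
  have hpow1 : ∀ x : E, x ≠ 0 → x ^ (q ^ 2 - 1) = 1 := by
    intro x hx
    have := FiniteField.pow_card_sub_one_eq_one x hx
    rwa [hE] at this
  -- membership of (q-1)-th powers in μ
  have hmem : ∀ x : E, x ≠ 0 → (x ^ (q - 1)) ^ (q + 1) = 1 := by
    intro x hx
    rw [← pow_mul, hmul]
    exact hpow1 x hx
  -- coprimality of q-1 and q+1
  have hcop : Nat.Coprime (q - 1) (q + 1) := by
    have hd1 : Nat.gcd (q - 1) (q + 1) ∣ q - 1 := Nat.gcd_dvd_left _ _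
    have hd2 : Nat.gcd (q - 1) (q + 1) ∣ q + 1 := Nat.gcd_dvd_right _ _
    have hd3 : Nat.gcd (q - 1) (q + 1) ∣ 2 := by
      have := Nat.dvd_sub hd2 hd1
      have he : q + 1 - (q - 1) = 2 := by omega
      rwa [he] at this
    have hle : Nat.gcd (q - 1) (q + 1) ≤ 2 := Nat.le_of_dvd (by norm_num) hd3
    have hpos : 0 < Nat.gcd (q - 1) (q + 1) := Nat.gcd_pos_of_pos_right _ (by omega)
    rcases (by omega : Nat.gcd (q - 1) (q + 1) = 1 ∨ Nat.gcd (q - 1) (q + 1) = 2) with h1 | h1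
    · exact h1
    · exfalso
      have : 2 ∣ q - 1 := h1 ▸ hd1
      omega
  -- every element of μ is a (q-1)-th power of a nonzero element
  have hsurjpow : ∀ u : E, u ^ (q + 1) = 1 → ∃ x : E, x ≠ 0 ∧ x ^ (q - 1) = u := by
    intro u hu
    obtain ⟨a, -, ha⟩ := Nat.exists_mul_mod_eq_one_of_coprime hcop (by omega)
    have hu0 : u ≠ 0 := by
      intro h0
      rw [h0, zero_pow (by omega : q + 1 ≠ 0)] at hu
      exact one_ne_zero hu.symm
    refine ⟨u ^ a, pow_ne_zero _ hu0, ?_⟩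
    have hdm := Nat.div_add_mod ((q - 1) * a) (q + 1)
    rw [ha] at hdm
    rw [← pow_mul, Nat.mul_comm a (q - 1), ← hdm, pow_add, pow_mul, hu, one_pow, pow_one, one_mul]
  -- key relation : g (x^(q-1)) = (f x)^(q-1)
  have hkey : ∀ x : E, g (x ^ (q - 1)) = (f x) ^ (q - 1) := by
    intro x
    simp only [hf, hg, mul_pow, ← pow_mul]
    rw [Nat.mul_comm r (q - 1), Nat.mul_comm (q - 1) r]
  have hf0 : f 0 = 0 := by
    simp only [hf, zero_pow hr.ne', zero_mul]
  constructor
  · -- forward direction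
    intro hbij
    have hne : ∀ x : E, x ≠ 0 → f x ≠ 0 := by
      intro x hx hfx
      exact hx (hbij.1 (hfx.trans hf0.symm))
    constructor
    · -- gcd r (q-1) = 1
      by_contra hd
      set d := Nat.gcd r (q - 1) with hdd
      have hdr : d ∣ r := Nat.gcd_dvd_left _ _
      have hdq : d ∣ q - 1 := Nat.gcd_dvd_right _ _
      have hdpos : 0 < d := Nat.gcd_pos_of_pos_left _ hr
      have hd2 : 2 ≤ d := by omega
      have hq1pos : 0 < q - 1 := by
        rcases hdq with ⟨e, he⟩
        omega
      -- build an element of order dividing d, nontrivial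
      obtain ⟨gu, hgu⟩ := IsCyclic.exists_generator (α := Eˣ)
      have hcardu : Nat.card Eˣ = q ^ 2 - 1 := by
        rw [Nat.card_units, Nat.card_eq_fintype_card, hE]
      have hogu : orderOf gu = q ^ 2 - 1 := by
        rw [orderOf_eq_card_of_forall_mem_zpowers hgu, hcardu]
      have hdq2 : d ∣ q ^ 2 - 1 := hdq.trans (Dvd.intro _ hmul)
      set ζu : Eˣ := gu ^ ((q ^ 2 - 1) / d) with hζu
      have hζd : ζu ^ d = 1 := by
        rw [hζu, ← pow_mul, Nat.div_mul_cancel hdq2, ← hogu, pow_orderOf_eq_one]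
      have hζq : ζu ^ (q - 1) = 1 := by
        rcases hdq with ⟨e, he⟩
        rw [he, pow_mul, hζd, one_pow]
      have hζr : ζu ^ r = 1 := by
        rcases hdr with ⟨s, hs⟩
        rw [hs, pow_mul, hζd, one_pow]
      have hζne : ζu ≠ 1 := by
        intro h1
        have : orderOf gu ∣ (q ^ 2 - 1) / d := orderOf_dvd_of_pow_eq_one h1
        rw [hogu] at this
        have hlt : (q ^ 2 - 1) / d < q ^ 2 - 1 :=
          Nat.div_lt_self (by nlinarith [hq2]) hd2
        have hpos' : 0 < (q ^ 2 - 1) / d := Nat.div_pos (Nat.le_of_dvd (by nlinarith) hdq2) hdpos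
        have := Nat.le_of_dvd hpos' this
        omega
      -- contradiction with injectivity: f ζ = f 1
      have hfeq : f (ζu : E) = f 1 := by
        simp only [hf]
        have h1 : ((ζu : E)) ^ r = 1 := by
          rw [← Units.val_pow_eq_pow_val, hζr, Units.val_one]
        have h2 : ((ζu : E)) ^ (q - 1) = 1 := by
          rw [← Units.val_pow_eq_pow_val, hζq, Units.val_one]
        rw [h1, h2, one_pow, one_pow]
      have := hbij.1 hfeq
      exact hζne (Units.ext this)
    · -- BijOn
      have hmapsto : Set.MapsTo g μ μ := by
        intro u hu
        obtain ⟨x, hx0, hxu⟩ := hsurjpow u hu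
        have : g u = (f x) ^ (q - 1) := by rw [← hxu, hkey]
        simp only [hμ, Set.mem_setOf_eq] at *
        rw [this]
        exact hmem _ (hne x hx0)
      have hsurj : Set.SurjOn g μ μ := by
        intro v hv
        obtain ⟨y, hy0, hyv⟩ := hsurjpow v hv
        obtain ⟨x, hxy⟩ := hbij.2 y
        have hx0 : x ≠ 0 := by
          intro h0
          rw [h0, hf0] at hxy
          exact hy0 hxy.symm
        refine ⟨x ^ (q - 1), hmem x hx0, ?_⟩
        rw [hkey, hxy, hyv]
      exact ((Set.toFinite μ).surjOn_iff_bijOn_of_mapsTo hmapsto).mp hsurj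
  · -- reverse direction
    rintro ⟨hgcd, hbij⟩
    rw [← Finite.injective_iff_bijective]
    intro x y hxy
    by_cases hx0 : x = 0
    · by_cases hy0 : y = 0
      · rw [hx0, hy0]
      · exfalso
        rw [hx0, hf0] at hxy
        -- f y = 0 with y ≠ 0 : then h.eval (y^(q-1)) = 0, contradicting MapsTo
        have hyu : (y ^ (q - 1)) ∈ μ := hmem y hy0
        have := hbij.mapsTo hyu
        simp only [hμ, hg, Set.mem_setOf_eq] at this
        have hgy : g (y ^ (q - 1)) = 0 := by
          rw [hkey, ← hxy, zero_pow]
          omega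
        simp only [hg] at hgy
        rw [hgy] at this
        rw [zero_pow (by omega : q + 1 ≠ 0)] at this
        exact one_ne_zero this.symm
    · by_cases hy0 : y = 0
      · exfalso
        rw [hy0, hf0] at hxy
        have hxu : (x ^ (q - 1)) ∈ μ := hmem x hx0
        have := hbij.mapsTo hxu
        simp only [hμ, hg, Set.mem_setOf_eq] at this
        have hgx : g (x ^ (q - 1)) = 0 := by
          rw [hkey, hxy, zero_pow]
          omega
        simp only [hg] at hgx
        rw [hgx] at this
        rw [zero_pow (by omega : q + 1 ≠ 0)] at this
        exact one_ne_zero this.symm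
      · -- both nonzero
        have hfy : f y ≠ 0 := by
          intro h0
          have hyu : (y ^ (q - 1)) ∈ μ := hmem y hy0
          have := hbij.mapsTo hyu
          simp only [hμ, Set.mem_setOf_eq] at this
          have hgy : g (y ^ (q - 1)) = 0 := by rw [hkey, h0, zero_pow]; omega
          rw [hgy, zero_pow (by omega : q + 1 ≠ 0)] at this
          exact one_ne_zero this.symm
        have hgeq : g (x ^ (q - 1)) = g (y ^ (q - 1)) := by
          rw [hkey, hkey, hxy]
        have hpow : x ^ (q - 1) = y ^ (q - 1) :=
          hbij.injOn (hmem x hx0) (hmem y hy0) hgeq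
        obtain ⟨ζ, hζ⟩ : ∃ z : E, z = x * y⁻¹ := ⟨_, rfl⟩
        have hζq : ζ ^ (q - 1) = 1 := by
          rw [hζ, mul_pow, hpow, inv_pow, mul_inv_cancel₀ (pow_ne_zero _ hy0)]
        have hx' : x = ζ * y := by
          rw [hζ, mul_assoc, inv_mul_cancel₀ hy0, mul_one]
        have hζr : ζ ^ r = 1 := by
          have hfx : f x = ζ ^ r * f y := by
            simp only [hf]
            rw [hx', mul_pow]
            have h2 : (ζ * y) ^ (q - 1) = y ^ (q - 1) := by
              rw [mul_pow, hζq, one_mul]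
            rw [h2, mul_assoc]
          rw [hxy] at hfx
          have h1 : (1 : E) * f y = ζ ^ r * f y := by rw [one_mul, ← hfx]
          exact (mul_right_cancel₀ hfy h1).symm
        have hord : orderOf ζ ∣ Nat.gcd r (q - 1) :=
          Nat.dvd_gcd (orderOf_dvd_of_pow_eq_one hζr) (orderOf_dvd_of_pow_eq_one hζq)
        rw [hgcd, Nat.dvd_one] at hord
        have hζ1 : ζ = 1 := orderOf_eq_one_iff.mp hord
        rw [hζ, mul_inv_eq_one₀ hy0] at hζ1
        exact hζ1
end

section
/- Let q be even, a ∈ F_q^*, b ∈ F_{q^2}^*, and let f(X) = X^4(1 + aX^{q-1} + bX^{3(q-1)}). Then f is a permutation polynomial of F_{q^2} if and only if the polynomial 1 + aX + bX^3 has no root in μ_{q+1} and the rational function g(X) = X(b^q + aX^2 + X^3)/(1 + aX + bX^3) permutes μ_{q+1}. -/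
theorem pp_iff_g_permutes_mu (n : ℕ) (hn : 0 < n) (q : ℕ) (hq : q = 2 ^ n)
    (F E : Type*) [Field F] [Fintype F] [Field E] [Fintype E] [Algebra F E]
    (hF : Fintype.card F = q) (hE : Fintype.card E = q ^ 2)
    (a : F) (ha : a ≠ 0) (b : E) (hb : b ≠ 0) :
    Function.Bijective
        (fun x : E =>
          x ^ 4 * (1 + algebraMap F E a * x ^ (q - 1) + b * x ^ (3 * (q - 1)))) ↔
      ((∀ x ∈ {x : E | x ^ (q + 1) = 1}, 1 + algebraMap F E a * x + b * x ^ 3 ≠ 0) ∧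
        Set.BijOn
          (fun x : E =>
            x * (b ^ q + algebraMap F E a * x ^ 2 + x ^ 3) /
              (1 + algebraMap F E a * x + b * x ^ 3))
          {x : E | x ^ (q + 1) = 1} {x : E | x ^ (q + 1) = 1}) := by
  have hq2 : 2 ≤ q := by
    rw [hq]
    calc 2 = 2 ^ 1 := (pow_one 2).symm
    _ ≤ 2 ^ n := Nat.pow_le_pow_right (by norm_num) hn
  set A : E := algebraMap F E a with hA
  set f : E → E := fun x : E =>
    x ^ 4 * (1 + A * x ^ (q - 1) + b * x ^ (3 * (q - 1))) with hfdef
  set g : E → E := fun x : E =>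
    x * (b ^ q + A * x ^ 2 + x ^ 3) / (1 + A * x + b * x ^ 3) with hgdef
  set μ : Set E := {x : E | x ^ (q + 1) = 1} with hμ
  -- characteristic 2
  have h2 : (2 : E) = 0 := by
    have hcard := FiniteField.cast_card_eq_zero E
    rw [hE, hq] at hcard
    push_cast at hcard
    have h1 : ((2:E) ^ n) ^ 2 = 0 := hcard
    rw [← pow_mul] at h1
    exact pow_eq_zero_iff (by omega) |>.mp h1
  haveI hchar : CharP E 2 := by
    obtain ⟨p, hp⟩ := CharP.exists E
    haveI := hp
    have hpp : p.Prime := CharP.char_is_prime E p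
    have hdvd : p ∣ 2 := (CharP.cast_eq_zero_iff E p 2).mp (by exact_mod_cast h2)
    have : p = 2 := (Nat.prime_dvd_prime_iff_eq hpp Nat.prime_two).mp hdvd
    rwa [this] at hp
  have frq : ∀ x y : E, (x + y) ^ q = x ^ q + y ^ q := by
    intro x y; rw [hq]; exact add_pow_char_pow x y 2 n
  have haq : A ^ q = A := by
    rw [hA, ← map_pow]
    congr 1
    rw [← hF]; exact FiniteField.pow_card a
  have hfact : q ^ 2 - 1 = (q - 1) * (q + 1) := by
    obtain ⟨r, rfl⟩ : ∃ r, q = r + 2 := ⟨q - 2, by omega⟩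
    have h1 : (r + 2) ^ 2 = (r + 1) * (r + 3) + 1 := by ring
    rw [h1]
    simp
  have hmu : ∀ z : E, z ≠ 0 → (z ^ (q - 1)) ^ (q + 1) = 1 := by
    intro z hz
    rw [← pow_mul, ← hfact, ← hE]
    exact FiniteField.pow_card_sub_one_eq_one z hz
  have hnz0 : ∀ u : E, u ^ (q + 1) = 1 → u ≠ 0 := by
    intro u hu h0
    rw [h0, zero_pow (by omega)] at hu
    exact zero_ne_one hu
  -- surjectivity of z ↦ z^(q-1) onto μ
  haveI : DecidableEq E := Classical.decEq E
  have surj : ∀ u : E, u ^ (q + 1) = 1 → ∃ x : E, x ≠ 0 ∧ x ^ (q - 1) = u := by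
    intro u hu
    have hu0 : u ≠ 0 := hnz0 u hu
    obtain ⟨ζ, hζ⟩ := IsCyclic.exists_generator (α := Eˣ)
    have hord : orderOf ζ = q ^ 2 - 1 := by
      rw [orderOf_eq_card_of_forall_mem_zpowers hζ, Nat.card_eq_fintype_card,
        Fintype.card_units, hE]
    obtain ⟨m, hm'⟩ := hζ (Units.mk0 u hu0)
    have hm : ζ ^ m = Units.mk0 u hu0 := hm'
    have hv : (Units.mk0 u hu0) ^ (q + 1) = 1 := by
      ext; simpa using hu
    have hdvd : ((q ^ 2 - 1 : ℕ) : ℤ) ∣ m * ((q + 1 : ℕ) : ℤ) := by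
      rw [← hord, orderOf_dvd_iff_zpow_eq_one, zpow_mul, hm, zpow_natCast, hv]
    have hdvd2 : ((q - 1 : ℕ) : ℤ) ∣ m := by
      have h1 : ((q - 1 : ℕ) : ℤ) * ((q + 1 : ℕ) : ℤ) ∣ m * ((q + 1 : ℕ) : ℤ) := by
        rw [← Nat.cast_mul, ← hfact]; exact hdvd
      exact (mul_dvd_mul_iff_right (by positivity : ((q + 1 : ℕ) : ℤ) ≠ 0)).mp h1
    obtain ⟨s, hs⟩ := hdvd2
    refine ⟨((ζ ^ s : Eˣ) : E), Units.ne_zero _, ?_⟩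
    have hpow : ((ζ ^ s) ^ (q - 1) : Eˣ) = Units.mk0 u hu0 := by
      rw [← zpow_natCast (ζ ^ s), ← zpow_mul, mul_comm, ← hs, hm]
    calc ((ζ ^ s : Eˣ) : E) ^ (q - 1) = (((ζ ^ s) ^ (q - 1) : Eˣ) : E) := by
          rw [Units.val_pow_eq_pow_val]
      _ = u := by rw [hpow]; rfl
  -- rewriting f via u = x^(q-1)
  have hfeq : ∀ x u : E, x ^ (q - 1) = u → f x = x ^ 4 * (1 + A * u + b * u ^ 3) := by
    intro x u hxu
    show x ^ 4 * (1 + A * x ^ (q - 1) + b * x ^ (3 * (q - 1))) = _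
    rw [mul_comm 3, pow_mul, hxu]
  -- the key identity: (f x)^(q-1) = g (x^(q-1))
  have key : ∀ u : E, u ^ (q + 1) = 1 → (1 + A * u + b * u ^ 3) ≠ 0 →
      ∀ x : E, x ≠ 0 → x ^ (q - 1) = u → (f x) ^ (q - 1) = g u := by
    intro u hu hH x hx hxu
    rw [hfeq x u hxu]
    show _ = u * (b ^ q + A * u ^ 2 + u ^ 3) / (1 + A * u + b * u ^ 3)
    set H := 1 + A * u + b * u ^ 3 with hHdef
    rw [eq_div_iff hH]
    apply mul_left_cancel₀ (pow_ne_zero 4 hx)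
    have e1 : (x ^ 4 * H) ^ (q - 1) * (x ^ 4 * H) = (x ^ 4 * H) ^ q := by
      rw [← pow_succ]; congr 1; omega
    have e2 : (x ^ 4) ^ q = x ^ 4 * u ^ 4 := by
      rw [← pow_mul]
      have h4 : 4 * q = 4 + (q - 1) * 4 := by omega
      rw [h4, pow_add, pow_mul, hxu]
    have e3 : H ^ q = 1 + A * u ^ q + b ^ q * (u ^ q) ^ 3 := by
      rw [hHdef, frq, frq, one_pow, mul_pow, mul_pow, haq, ← pow_mul, mul_comm 3 q, pow_mul]
    have hw : u ^ q * u = 1 := by rw [← pow_succ]; exact hu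
    calc x ^ 4 * ((x ^ 4 * H) ^ (q - 1) * H)
        = (x ^ 4 * H) ^ (q - 1) * (x ^ 4 * H) := by ring
      _ = (x ^ 4 * H) ^ q := e1
      _ = (x ^ 4) ^ q * H ^ q := mul_pow _ _ _
      _ = x ^ 4 * u ^ 4 * (1 + A * u ^ q + b ^ q * (u ^ q) ^ 3) := by rw [e2, e3]
      _ = x ^ 4 * (u * (b ^ q + A * u ^ 2 + u ^ 3)) := by
          linear_combination (x ^ 4 * (A * u ^ 3 +
            b ^ q * u * (u ^ 2 * (u ^ q) ^ 2 + u * u ^ q + 1))) * hw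
  -- fourth powers determine elements in characteristic 2
  have h4inj : ∀ x y : E, x ^ 4 = y ^ 4 → x = y := by
    intro x y hxy
    have hsq : ∀ u v : E, (u + v) ^ 2 = u ^ 2 + v ^ 2 := fun u v => by
      linear_combination (u * v) * h2
    have h4 : (x + y) ^ 4 = x ^ 4 + y ^ 4 := by
      rw [show (x + y) ^ 4 = ((x + y) ^ 2) ^ 2 from by ring, hsq, hsq]
      ring
    have h0 : (x + y) ^ 4 = 0 := by
      rw [h4, hxy]
      linear_combination (y ^ 4) * h2
    have hxy0 : x + y = 0 := pow_eq_zero_iff (by norm_num) |>.mp h0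
    linear_combination hxy0 - y * h2
  -- solving t^4 = c within the kernel of z ↦ z^(q-1)
  have hodd : Odd (q - 1) := by
    have hdq : (2 : ℕ) ∣ q := ⟨2 ^ (n - 1), by rw [hq, ← pow_succ']; congr 1; omega⟩
    obtain ⟨m, hm⟩ := hdq
    exact ⟨m - 1, by omega⟩
  have hco : Nat.Coprime 4 (q - 1) := by
    have h1 : Nat.Coprime 2 (q - 1) := Nat.coprime_two_left.mpr hodd
    have h4 := Nat.Coprime.pow_left 2 h1
    simpa using h4
  have hexp : ∀ c : E, c ^ (q - 1) = 1 → ∃ t : E, t ^ (q - 1) = 1 ∧ t ^ 4 = c := by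
    intro c hc
    rcases lt_or_ge (q - 1) 2 with h | h
    · have h1 : q - 1 = 1 := by omega
      rw [h1, pow_one] at hc
      exact ⟨1, by rw [one_pow], by rw [one_pow, hc]⟩
    · obtain ⟨k, -, hk⟩ := Nat.exists_mul_mod_eq_one_of_coprime hco (by omega)
      obtain ⟨m, hm⟩ : ∃ m, 4 * k = (q - 1) * m + 1 := by
        refine ⟨4 * k / (q - 1), ?_⟩
        have := Nat.div_add_mod (4 * k) (q - 1)
        omega
      refine ⟨c ^ k, ?_, ?_⟩
      · rw [← pow_mul, mul_comm, pow_mul, hc, one_pow]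
      · rw [← pow_mul, mul_comm k 4, hm, pow_add, pow_mul, hc, one_pow, one_mul, pow_one]
  constructor
  · -- forward direction
    intro hf
    have hfinj := hf.injective
    have hf0 : f 0 = 0 := by
      show (0:E) ^ 4 * _ = 0
      rw [zero_pow (by norm_num), zero_mul]
    have hroot : ∀ u ∈ μ, 1 + A * u + b * u ^ 3 ≠ 0 := by
      intro u hu hcon
      obtain ⟨x, hx0, hxu⟩ := surj u hu
      have hfx : f x = 0 := by rw [hfeq x u hxu, hcon, mul_zero]
      exact hx0 (hfinj (hfx.trans hf0.symm))
    refine ⟨hroot, ?_⟩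
    have hfne : ∀ u : E, u ∈ μ → ∀ x : E, x ≠ 0 → x ^ (q - 1) = u → f x ≠ 0 := by
      intro u hu x hx0 hxu
      rw [hfeq x u hxu]
      exact mul_ne_zero (pow_ne_zero _ hx0) (hroot u hu)
    have hmap : Set.MapsTo g μ μ := by
      intro u hu
      obtain ⟨x, hx0, hxu⟩ := surj u hu
      have hkey := key u hu (hroot u hu) x hx0 hxu
      show g u ^ (q + 1) = 1
      rw [← hkey]
      exact hmu (f x) (hfne u hu x hx0 hxu)
    have hinj : Set.InjOn g μ := by
      intro u hu v hv huv
      obtain ⟨x, hx0, hxu⟩ := surj u hu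
      obtain ⟨y, hy0, hyv⟩ := surj v hv
      have k1 := key u hu (hroot u hu) x hx0 hxu
      have k2 := key v hv (hroot v hv) y hy0 hyv
      have hfx : f x ≠ 0 := hfne u hu x hx0 hxu
      have hfy : f y ≠ 0 := hfne v hv y hy0 hyv
      have hpq : (f x) ^ (q - 1) = (f y) ^ (q - 1) := by rw [k1, k2, huv]
      have hc : (f x / f y) ^ (q - 1) = 1 := by
        rw [div_pow, hpq, div_self (pow_ne_zero _ hfy)]
      obtain ⟨t, ht1, ht4⟩ := hexp _ hc
      have heq : f (t * y) = f x := by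
        have h1 : (t * y) ^ (q - 1) = v := by rw [mul_pow, ht1, one_mul, hyv]
        rw [hfeq (t * y) v h1, hfeq y v hyv] at *
        rw [mul_pow, ht4, mul_assoc, div_mul_cancel₀ _ hfy]
      have hxy : t * y = x := hfinj heq
      calc u = x ^ (q - 1) := hxu.symm
        _ = (t * y) ^ (q - 1) := by rw [hxy]
        _ = v := by rw [mul_pow, ht1, one_mul, hyv]
    exact ((Set.toFinite μ).injOn_iff_bijOn_of_mapsTo hmap).mp hinj
  · -- reverse direction
    rintro ⟨hroot, hbij⟩
    rw [← Finite.injective_iff_bijective]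
    intro x y hxy
    have hne : ∀ z : E, z ≠ 0 → f z ≠ 0 := by
      intro z hz
      have hu : z ^ (q - 1) ∈ μ := hmu z hz
      rw [hfeq z _ rfl]
      exact mul_ne_zero (pow_ne_zero _ hz) (hroot _ hu)
    have hf0 : f 0 = 0 := by
      show (0:E) ^ 4 * _ = 0
      rw [zero_pow (by norm_num), zero_mul]
    by_cases hx0 : x = 0
    · subst hx0
      by_contra hy
      exact hne y (fun h => hy h.symm) (hxy.symm.trans hf0)
    · by_cases hy0 : y = 0
      · subst hy0
        exact absurd (hxy.trans hf0) (hne x hx0)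
      · have hu : x ^ (q - 1) ∈ μ := hmu x hx0
        have hv : y ^ (q - 1) ∈ μ := hmu y hy0
        have k1 := key _ hu (hroot _ hu) x hx0 rfl
        have k2 := key _ hv (hroot _ hv) y hy0 rfl
        have hguv : g (x ^ (q - 1)) = g (y ^ (q - 1)) := by
          rw [← k1, ← k2, hxy]
        have huv := hbij.injOn hu hv hguv
        have e1 := hfeq x _ rfl
        have e2 := hfeq y _ rfl
        rw [e1, e2, huv] at hxy
        exact h4inj x y (mul_right_cancel₀ (hroot _ hv) hxy)
end

section
/- Over F_2[a, b_1, k], the resultant in a of E_2 = a^5 + a^4 b_1 + a^4 + a^3 + a^2 b_1 + a^2 + k(a b_1^2 + b_1^2) + k^2(a b_1^4 + b_1^5 + b_1^4) and E_3 = a^4 b_1 + a^2 b_1 + a b_1^2 + b_1^2 + k b_1^3 + k^2 b_1^5 equals b_1^{17} k^2. -/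
/-- The resultant of two polynomials `p`, `q` (regarded as having degrees `m` and `n`
respectively), defined as the determinant of the `(m+n) × (m+n)` Sylvester matrix. -/
noncomputable def sylResultant {R : Type*} [CommRing R] (m n : ℕ) (p q : Polynomial R) : R :=
  Matrix.det (Matrix.of fun i j : Fin (m + n) =>
    if (i : ℕ) < n then
      (if (i : ℕ) ≤ (j : ℕ) ∧ (j : ℕ) - (i : ℕ) ≤ m then
        p.coeff (m - ((j : ℕ) - (i : ℕ))) else 0)
    else
      (if (i : ℕ) - n ≤ (j : ℕ) ∧ (j : ℕ) - ((i : ℕ) - n) ≤ n then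
        q.coeff (n - ((j : ℕ) - ((i : ℕ) - n))) else 0))

open Polynomial

/-- Abbreviations: work in `F_2[b1, k][a]`, where `b1 = X 0`, `k = X 1`. -/
noncomputable def b1 : MvPolynomial (Fin 2) (ZMod 2) := MvPolynomial.X 0
noncomputable def k : MvPolynomial (Fin 2) (ZMod 2) := MvPolynomial.X 1

/-- `E_2 = a^5 + a^4 b_1 + a^4 + a^3 + a^2 b_1 + a^2 + k(a b_1^2 + b_1^2)
  + k^2(a b_1^4 + b_1^5 + b_1^4)` as a polynomial in `a`. -/
noncomputable def E2 : Polynomial (MvPolynomial (Fin 2) (ZMod 2)) :=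
  Polynomial.X ^ 5 + Polynomial.C b1 * Polynomial.X ^ 4 + Polynomial.X ^ 4 + Polynomial.X ^ 3 + Polynomial.C b1 * Polynomial.X ^ 2 + Polynomial.X ^ 2 +
    Polynomial.C (k * b1 ^ 2) * Polynomial.X + Polynomial.C (k * b1 ^ 2) + Polynomial.C (k ^ 2 * b1 ^ 4) * Polynomial.X +
    Polynomial.C (k ^ 2 * (b1 ^ 5 + b1 ^ 4))

/-- `E_3 = a^4 b_1 + a^2 b_1 + a b_1^2 + b_1^2 + k b_1^3 + k^2 b_1^5`. -/
noncomputable def E3 : Polynomial (MvPolynomial (Fin 2) (ZMod 2)) :=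
  Polynomial.C b1 * Polynomial.X ^ 4 + Polynomial.C b1 * Polynomial.X ^ 2 + Polynomial.C (b1 ^ 2) * Polynomial.X + Polynomial.C (b1 ^ 2) + Polynomial.C (k * b1 ^ 3) +
    Polynomial.C (k ^ 2 * b1 ^ 5)


set_option maxHeartbeats 4000000
set_option maxRecDepth 10000

noncomputable def Msyl : Matrix (Fin 9) (Fin 9) (MvPolynomial (Fin 2) (ZMod 2)) :=
  !![(1 : MvPolynomial (Fin 2) (ZMod 2)), (1 : MvPolynomial (Fin 2) (ZMod 2)) + b1, (1 : MvPolynomial (Fin 2) (ZMod 2)), (1 : MvPolynomial (Fin 2) (ZMod 2)) + b1, b1^2 * k + b1^4 * k^2, b1^2 * k + b1^4 * k^2 + b1^5 * k^2, 0, 0, 0;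
    0, (1 : MvPolynomial (Fin 2) (ZMod 2)), (1 : MvPolynomial (Fin 2) (ZMod 2)) + b1, (1 : MvPolynomial (Fin 2) (ZMod 2)), (1 : MvPolynomial (Fin 2) (ZMod 2)) + b1, b1^2 * k + b1^4 * k^2, b1^2 * k + b1^4 * k^2 + b1^5 * k^2, 0, 0;
    0, 0, (1 : MvPolynomial (Fin 2) (ZMod 2)), (1 : MvPolynomial (Fin 2) (ZMod 2)) + b1, (1 : MvPolynomial (Fin 2) (ZMod 2)), (1 : MvPolynomial (Fin 2) (ZMod 2)) + b1, b1^2 * k + b1^4 * k^2, b1^2 * k + b1^4 * k^2 + b1^5 * k^2, 0;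
    0, 0, 0, (1 : MvPolynomial (Fin 2) (ZMod 2)), (1 : MvPolynomial (Fin 2) (ZMod 2)) + b1, (1 : MvPolynomial (Fin 2) (ZMod 2)), (1 : MvPolynomial (Fin 2) (ZMod 2)) + b1, b1^2 * k + b1^4 * k^2, b1^2 * k + b1^4 * k^2 + b1^5 * k^2;
    b1, 0, b1, b1^2, b1^2 + b1^3 * k + b1^5 * k^2, 0, 0, 0, 0;
    0, b1, 0, b1, b1^2, b1^2 + b1^3 * k + b1^5 * k^2, 0, 0, 0;
    0, 0, b1, 0, b1, b1^2, b1^2 + b1^3 * k + b1^5 * k^2, 0, 0;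
    0, 0, 0, b1, 0, b1, b1^2, b1^2 + b1^3 * k + b1^5 * k^2, 0;
    0, 0, 0, 0, b1, 0, b1, b1^2, b1^2 + b1^3 * k + b1^5 * k^2]

noncomputable def Lmat : Matrix (Fin 9) (Fin 9) (MvPolynomial (Fin 2) (ZMod 2)) :=
  !![(1 : MvPolynomial (Fin 2) (ZMod 2)), 0, 0, 0, 0, 0, 0, 0, 0;
    0, (1 : MvPolynomial (Fin 2) (ZMod 2)), 0, 0, 0, 0, 0, 0, 0;
    0, 0, (1 : MvPolynomial (Fin 2) (ZMod 2)), 0, 0, 0, 0, 0, 0;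
    0, 0, 0, (1 : MvPolynomial (Fin 2) (ZMod 2)), 0, 0, 0, 0, 0;
    (-1)*b1, b1 + b1^2, (-1)*b1 + (-2) * b1^2 + (-1)*b1^3, b1 + (2) * b1^2 + (3) * b1^3 + b1^4, (1 : MvPolynomial (Fin 2) (ZMod 2)), 0, 0, 0, 0;
    (-1)*b1^2 + (-2) * b1^3 + (-3) * b1^4 + (-1)*b1^5, (-1)*b1^3, b1^3 + b1^4, (-2) * b1^3 + (-4) * b1^4 + (-4) * b1^5 + (-1)*b1^6, b1 + (2) * b1^2 + (3) * b1^3 + b1^4, b1 + (4) * b1^2 + (5) * b1^3 + (4) * b1^4 + b1^5, 0, 0, 0;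
    (2) * b1^4 + (4) * b1^5 + (4) * b1^6 + b1^7, (-2) * b1^6 + (-1)*b1^6 * k + (-1)*b1^7 + (-2) * b1^7 * k + (-1)*b1^8 * k, (-2) * b1^5 + b1^7 * k, (4) * b1^5 + (6) * b1^6 + (4) * b1^7 + (-1)*b1^7 * k + b1^8 + (-1)*b1^8 * k, (-2) * b1^3 + (-4) * b1^4 + (-4) * b1^5 + (-1)*b1^6, (-2) * b1^3 + (-6) * b1^4 + (-6) * b1^5 + b1^5 * k + (-4) * b1^6 + (2) * b1^6 * k + (-1)*b1^7 + b1^7 * k, (2) * b1^4 + (2) * b1^5 + b1^5 * k + (3) * b1^6 + (2) * b1^6 * k + b1^7 + (3) * b1^7 * k + b1^8 * k, 0, 0;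
    (-4) * b1^6 + (-6) * b1^7 + (-4) * b1^8 + b1^8 * k + (-1)*b1^9 + b1^9 * k, (2) * b1^6 + (4) * b1^7 + (4) * b1^8 + (2) * b1^8 * k + b1^9 + (3) * b1^9 * k + b1^10 * k, (-4) * b1^6 + (-6) * b1^7 + (-6) * b1^8 + (-2) * b1^9 + (-3) * b1^9 * k + (-2) * b1^10 * k + (-1)*b1^10 * k^2 + (-1)*b1^11 * k^2, (-6) * b1^7 + (-6) * b1^8 + (-4) * b1^9 + (4) * b1^9 * k + (-1)*b1^10 + (2) * b1^10 * k, (4) * b1^5 + (6) * b1^6 + (4) * b1^7 + (-1)*b1^7 * k + b1^8 + (-1)*b1^8 * k, (2) * b1^5 + (6) * b1^6 + (6) * b1^7 + (-3) * b1^7 * k + (4) * b1^8 + (-5) * b1^8 * k + b1^9 + (-2) * b1^9 * k, (2) * b1^5 + (-2) * b1^7 + (-2) * b1^7 * k + (-3) * b1^8 + (-2) * b1^8 * k + (-1)*b1^9 + (-2) * b1^9 * k + b1^9 * k^2 + (-1)*b1^10 * k + b1^10 * k^2, (4) * b1^5 + (12) * b1^6 + (12) * b1^7 + (8) * b1^8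 + (2) * b1^9 + (4) * b1^9 * k + b1^9 * k^2 + (2) * b1^10 * k + (2) * b1^10 * k^2 + b1^11 * k^2, 0;
    (6) * b1^8 + (6) * b1^9 + (4) * b1^10 + (-4) * b1^10 * k + b1^11 + (-2) * b1^11 * k, (-4) * b1^8 + (-6) * b1^9 + (-4) * b1^10 + (-2) * b1^10 * k + (-1)*b1^11 + (-2) * b1^11 * k + (-1)*b1^12 * k + (2) * b1^12 * k^2, (8) * b1^8 + (10) * b1^9 + (8) * b1^10 + (-2) * b1^10 * k + (2) * b1^11 + (4) * b1^11 * k + (2) * b1^12 * k, (-4) * b1^8 + (2) * b1^11 + (-10) * b1^11 * k + b1^12 + (-6) * b1^12 * k + (2) * b1^12 * k^2 + b1^14 * k^2 + (-2) * b1^14 * k^3, (-6) * b1^7 + (-6) * b1^8 + (-4) * b1^9 + (4) * b1^9 * k + (-1)*b1^10 + (2) * b1^10 * k, (-2) * b1^7 + (-6) * b1^8 + (-6) * b1^9 + (6) * b1^9 * k + (-4) * b1^10 + (8) * b1^10 * k + (-1)*b1^11 + (3) * b1^11 * k + (-2) * b1^11 * k^2, (-4) * b1^7 + (2) * b1^9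 + (4) * b1^9 * k + (3) * b1^10 + b1^11 + b1^11 * k + (-2) * b1^11 * k^2 + b1^12 * k + (-2) * b1^12 * k^2, (-4) * b1^7 + (-12) * b1^8 + (-12) * b1^9 + (2) * b1^9 * k + (-8) * b1^10 + (4) * b1^10 * k + (-2) * b1^11 + (-2) * b1^11 * k + (-2) * b1^11 * k^2 + (-2) * b1^12 * k + (-1)*b1^13 * k^2 + (2) * b1^13 * k^3, (4) * b1^7 + (12) * b1^8 + (12) * b1^9 + (8) * b1^10 + (2) * b1^11 + (6) * b1^11 * k + (-2) * b1^11 * k^2 + (3) * b1^12 * k + (-1)*b1^13 * k^2 + (2) * b1^13 * k^3 + (-1)*b1^14 * k^2 + (2) * b1^14 * k^3]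

noncomputable def Umat : Matrix (Fin 9) (Fin 9) (MvPolynomial (Fin 2) (ZMod 2)) :=
  !![(1 : MvPolynomial (Fin 2) (ZMod 2)), (1 : MvPolynomial (Fin 2) (ZMod 2)) + b1, (1 : MvPolynomial (Fin 2) (ZMod 2)), (1 : MvPolynomial (Fin 2) (ZMod 2)) + b1, b1^2 * k + b1^4 * k^2, b1^2 * k + b1^4 * k^2 + b1^5 * k^2, 0, 0, 0;
    0, (1 : MvPolynomial (Fin 2) (ZMod 2)), (1 : MvPolynomial (Fin 2) (ZMod 2)) + b1, (1 : MvPolynomial (Fin 2) (ZMod 2)), (1 : MvPolynomial (Fin 2) (ZMod 2)) + b1, b1^2 * k + b1^4 * k^2, b1^2 * k + b1^4 * k^2 + b1^5 * k^2, 0, 0;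
    0, 0, (1 : MvPolynomial (Fin 2) (ZMod 2)), (1 : MvPolynomial (Fin 2) (ZMod 2)) + b1, (1 : MvPolynomial (Fin 2) (ZMod 2)), (1 : MvPolynomial (Fin 2) (ZMod 2)) + b1, b1^2 * k + b1^4 * k^2, b1^2 * k + b1^4 * k^2 + b1^5 * k^2, 0;
    0, 0, 0, (1 : MvPolynomial (Fin 2) (ZMod 2)), (1 : MvPolynomial (Fin 2) (ZMod 2)) + b1, (1 : MvPolynomial (Fin 2) (ZMod 2)), (1 : MvPolynomial (Fin 2) (ZMod 2)) + b1, b1^2 * k + b1^4 * k^2, b1^2 * k + b1^4 * k^2 + b1^5 * k^2;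
    0, 0, 0, 0, b1 + (4) * b1^2 + (5) * b1^3 + (4) * b1^4 + b1^5, (-1)*b1^2 + b1^4 * k, b1 + (3) * b1^2 + (5) * b1^3 + (4) * b1^4 + (-1)*b1^4 * k + b1^5 + (-1)*b1^5 * k, (2) * b1^5 * k + b1^6 * k + (-1)*b1^6 * k^2, b1^3 * k + (2) * b1^4 * k + (3) * b1^5 * k + b1^5 * k^2 + b1^6 * k + (3) * b1^6 * k^2 + (5) * b1^7 * k^2 + (4) * b1^8 * k^2 + b1^9 * k^2;
    0, 0, 0, 0, 0, (2) * b1^4 + (2) * b1^5 + b1^5 * k + (3) * b1^6 + (2) * b1^6 * k + b1^7 + (3) * b1^7 * k + b1^8 * k, (-2) * b1^3 + (-6) * b1^4 + (-8) * b1^5 + (-5) * b1^6 + b1^6 * k + (-1)*b1^7, (-1)*b1^5 * k + (-3) * b1^6 * k + (-4) * b1^7 * k + (-1)*b1^7 * k^2 + (-1)*b1^8 * k + (-2) * b1^8 * k^2 + (-3) * b1^9 * k^2 + (-1)*b1^10 * k^2, (-2) * b1^5 * k + (-4) * b1^6 * k + (-4) * b1^7 * k + (-2) * b1^7 * k^2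 + (-1)*b1^8 * k + (-6) * b1^8 * k^2 + (-8) * b1^9 * k^2 + (-5) * b1^10 * k^2 + (-1)*b1^11 * k^2;
    0, 0, 0, 0, 0, 0, (4) * b1^5 + (12) * b1^6 + (12) * b1^7 + (8) * b1^8 + (2) * b1^9 + (4) * b1^9 * k + b1^9 * k^2 + (2) * b1^10 * k + (2) * b1^10 * k^2 + b1^11 * k^2, (2) * b1^7 * k + (6) * b1^8 * k + (4) * b1^9 * k + (2) * b1^9 * k^2 + b1^10 * k + (3) * b1^10 * k^2 + (4) * b1^11 * k^2 + b1^12 * k^2, (4) * b1^7 * k + (6) * b1^8 * k + (4) * b1^9 * k + (3) * b1^9 * k^2 + b1^10 * k + (9) * b1^10 * k^2 + (10) * b1^11 * k^2 + (-1)*b1^11 * k^3 + (5) * b1^12 * k^2 + (-2) * b1^12 * k^3 + b1^13 * k^2 + (-1)*b1^13 * k^3;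
    0, 0, 0, 0, 0, 0, 0, (4) * b1^7 + (12) * b1^8 + (12) * b1^9 + (8) * b1^10 + (2) * b1^11 + (6) * b1^11 * k + (-2) * b1^11 * k^2 + (3) * b1^12 * k + (-1)*b1^13 * k^2 + (2) * b1^13 * k^3 + (-1)*b1^14 * k^2 + (2) * b1^14 * k^3, (-6) * b1^9 * k + (-6) * b1^10 * k + (-4) * b1^11 * k + (-2) * b1^11 * k^2 + (-1)*b1^12 * k + (-10) * b1^12 * k^2 + (-10) * b1^13 * k^2 + (4) * b1^13 * k^3 + (-5) * b1^14 * k^2 + (6) * b1^14 * k^3 + (-1)*b1^15 * k^2 + (2) * b1^15 * k^3;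
    0, 0, 0, 0, 0, 0, 0, 0, (4) * b1^9 + (12) * b1^10 + (12) * b1^11 + (12) * b1^11 * k + (8) * b1^12 + (12) * b1^12 * k + (2) * b1^13 + (16) * b1^13 * k + (-4) * b1^13 * k^2 + (6) * b1^14 * k + (12) * b1^14 * k^2 + (12) * b1^15 * k^2 + (-8) * b1^15 * k^3 + (4) * b1^16 * k^2 + (-8) * b1^16 * k^3 + b1^17 * k^2 + (-4) * b1^17 * k^3 + (4) * b1^17 * k^4]

theorem resultant_E2_E3 : sylResultant 5 4 E2 E3 = b1 ^ 17 * k ^ 2 := by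
  have h2 : (2 : MvPolynomial (Fin 2) (ZMod 2)) = 0 := by
    simpa using CharP.cast_eq_zero (MvPolynomial (Fin 2) (ZMod 2)) 2
  have h2p : (2 : Polynomial (ZMod 2)) = 0 := by
    simpa using CharP.cast_eq_zero (Polynomial (ZMod 2)) 2
  have e2c5 : E2.coeff 5 = (1 : MvPolynomial (Fin 2) (ZMod 2)) := by simp only [E2, E3, Polynomial.coeff_add, Polynomial.coeff_C_mul, Polynomial.coeff_X_pow, Polynomial.coeff_C, Polynomial.coeff_X]; norm_num; try ring
  have e2c4 : E2.coeff 4 = (1 : MvPolynomial (Fin 2) (ZMod 2)) + b1 := by simp only [E2, E3, Polynomial.coeff_add, Polynomial.coeff_C_mul, Polynomial.coeff_X_pow, Polynomial.coeff_C, Polynomial.coeff_X]; norm_num; try ring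
  have e2c3 : E2.coeff 3 = (1 : MvPolynomial (Fin 2) (ZMod 2)) := by simp only [E2, E3, Polynomial.coeff_add, Polynomial.coeff_C_mul, Polynomial.coeff_X_pow, Polynomial.coeff_C, Polynomial.coeff_X]; norm_num; try ring
  have e2c2 : E2.coeff 2 = (1 : MvPolynomial (Fin 2) (ZMod 2)) + b1 := by simp only [E2, E3, Polynomial.coeff_add, Polynomial.coeff_C_mul, Polynomial.coeff_X_pow, Polynomial.coeff_C, Polynomial.coeff_X]; norm_num; try ring
  have e2c1 : E2.coeff 1 = b1^2 * k + b1^4 * k^2 := by simp only [E2, E3, Polynomial.coeff_add, Polynomial.coeff_C_mul, Polynomial.coeff_X_pow, Polynomial.coeff_C, Polynomial.coeff_X]; norm_num; try ring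
  have e2c0 : E2.coeff 0 = b1^2 * k + b1^4 * k^2 + b1^5 * k^2 := by simp only [E2, E3, Polynomial.coeff_add, Polynomial.coeff_C_mul, Polynomial.coeff_X_pow, Polynomial.coeff_C, Polynomial.coeff_X]; norm_num; try ring
  have e3c4 : E3.coeff 4 = b1 := by simp only [E2, E3, Polynomial.coeff_add, Polynomial.coeff_C_mul, Polynomial.coeff_X_pow, Polynomial.coeff_C, Polynomial.coeff_X]; norm_num; try ring
  have e3c3 : E3.coeff 3 = 0 := by simp only [E2, E3, Polynomial.coeff_add, Polynomial.coeff_C_mul, Polynomial.coeff_X_pow, Polynomial.coeff_C, Polynomial.coeff_X]; norm_num; try ring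
  have e3c2 : E3.coeff 2 = b1 := by simp only [E2, E3, Polynomial.coeff_add, Polynomial.coeff_C_mul, Polynomial.coeff_X_pow, Polynomial.coeff_C, Polynomial.coeff_X]; norm_num; try ring
  have e3c1 : E3.coeff 1 = b1^2 := by simp only [E2, E3, Polynomial.coeff_add, Polynomial.coeff_C_mul, Polynomial.coeff_X_pow, Polynomial.coeff_C, Polynomial.coeff_X]; norm_num; try ring
  have e3c0 : E3.coeff 0 = b1^2 + b1^3 * k + b1^5 * k^2 := by simp only [E2, E3, Polynomial.coeff_add, Polynomial.coeff_C_mul, Polynomial.coeff_X_pow, Polynomial.coeff_C, Polynomial.coeff_X]; norm_num; try ring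
  have hA : sylResultant 5 4 E2 E3 = Msyl.det := by
    unfold sylResultant
    congr 1
    rw [← Matrix.ext_iff]
    simp only [Fin.forall_fin_succ, IsEmpty.forall_iff, and_true, true_and]
    simp only [Matrix.of_apply, Fin.val_succ, Fin.val_zero, Nat.reduceAdd, Nat.zero_add,
      Nat.reduceSub, Msyl, Matrix.cons_val_zero, Matrix.cons_val_succ,
      e2c5, e2c4, e2c3, e2c2, e2c1, e2c0, e3c4, e3c3, e3c2, e3c1, e3c0]
    norm_num
    repeat' apply And.intro
    all_goals try ring
  have hLM : Lmat * Msyl = Umat := by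
    rw [← Matrix.ext_iff]
    simp only [Fin.forall_fin_succ, IsEmpty.forall_iff, and_true, true_and,
      Matrix.mul_apply, Fin.sum_univ_succ, Fin.sum_univ_zero, Lmat, Msyl, Umat,
      Matrix.cons_val_zero, Matrix.cons_val_succ, Matrix.of_apply, add_zero]
    repeat' apply And.intro
    all_goals try ring
  have hLtri : Lmat.BlockTriangular OrderDual.toDual := by
    intro i j hij
    fin_cases i <;> fin_cases j <;> first
      | exact absurd hij (by decide)
      | rfl
  have hUtri : Umat.BlockTriangular id := by
    intro i j hij
    fin_cases i <;> fin_cases j <;> first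
      | exact absurd hij (by decide)
      | rfl
  have hLdet : Lmat.det = (b1 + (4) * b1^2 + (5) * b1^3 + (4) * b1^4 + b1^5) * ((2) * b1^4 + (2) * b1^5 + b1^5 * k + (3) * b1^6 + (2) * b1^6 * k + b1^7 + (3) * b1^7 * k + b1^8 * k) * ((4) * b1^5 + (12) * b1^6 + (12) * b1^7 + (8) * b1^8 + (2) * b1^9 + (4) * b1^9 * k + b1^9 * k^2 + (2) * b1^10 * k + (2) * b1^10 * k^2 + b1^11 * k^2) * ((4) * b1^7 + (12) * b1^8 + (12) * b1^9 + (8) * b1^10 + (2) * b1^11 + (6) * b1^11 * k + (-2) * b1^11 * k^2 + (3) * b1^12 * k + (-1)*b1^13 * k^2 + (2) * b1^13 * k^3 + (-1)*b1^14 * k^2 + (2) * b1^14 * k^3) := by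
    rw [Matrix.det_of_lowerTriangular _ hLtri]
    simp only [Fin.prod_univ_succ, Fin.prod_univ_zero, Lmat,
      Matrix.cons_val_zero, Matrix.cons_val_succ, Matrix.of_apply]
    ring
  have hUdet : Umat.det = ((4) * b1^9 + (12) * b1^10 + (12) * b1^11 + (12) * b1^11 * k + (8) * b1^12 + (12) * b1^12 * k + (2) * b1^13 + (16) * b1^13 * k + (-4) * b1^13 * k^2 + (6) * b1^14 * k + (12) * b1^14 * k^2 + (12) * b1^15 * k^2 + (-8) * b1^15 * k^3 + (4) * b1^16 * k^2 + (-8) * b1^16 * k^3 + b1^17 * k^2 + (-4) * b1^17 * k^3 + (4) * b1^17 * k^4) * ((b1 + (4) * b1^2 + (5) * b1^3 + (4) * b1^4 + b1^5) * ((2) * b1^4 + (2) * b1^5 + b1^5 * k + (3) * b1^6 + (2) * b1^6 * k + b1^7 + (3) * b1^7 * k + b1^8 * k) * ((4) * b1^5 + (12) * b1^6 + (12) * b1^7 + (8) * b1^8 + (2) * b1^9 + (4) * b1^9 * k + b1^9 * k^2 + (2) * b1^10 * k + (2) * b1^10 * k^2 + b1^11 * k^2) * ((4) * b1^7 + (12)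 * b1^8 + (12) * b1^9 + (8) * b1^10 + (2) * b1^11 + (6) * b1^11 * k + (-2) * b1^11 * k^2 + (3) * b1^12 * k + (-1)*b1^13 * k^2 + (2) * b1^13 * k^3 + (-1)*b1^14 * k^2 + (2) * b1^14 * k^3)) := by
    rw [Matrix.det_of_upperTriangular hUtri]
    simp only [Fin.prod_univ_succ, Fin.prod_univ_zero, Umat,
      Matrix.cons_val_zero, Matrix.cons_val_succ, Matrix.of_apply]
    ring
  have hmul : Lmat.det * Msyl.det = Umat.det := by rw [← Matrix.det_mul, hLM]
  rw [hLdet, hUdet] at hmul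
  have hdl : ((b1 + (4) * b1^2 + (5) * b1^3 + (4) * b1^4 + b1^5) * ((2) * b1^4 + (2) * b1^5 + b1^5 * k + (3) * b1^6 + (2) * b1^6 * k + b1^7 + (3) * b1^7 * k + b1^8 * k) * ((4) * b1^5 + (12) * b1^6 + (12) * b1^7 + (8) * b1^8 + (2) * b1^9 + (4) * b1^9 * k + b1^9 * k^2 + (2) * b1^10 * k + (2) * b1^10 * k^2 + b1^11 * k^2) * ((4) * b1^7 + (12) * b1^8 + (12) * b1^9 + (8) * b1^10 + (2) * b1^11 + (6) * b1^11 * k + (-2) * b1^11 * k^2 + (3) * b1^12 * k + (-1)*b1^13 * k^2 + (2) * b1^13 * k^3 + (-1)*b1^14 * k^2 + (2) * b1^14 * k^3) : MvPolynomial (Fin 2) (ZMod 2)) ≠ 0 := by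
    intro h0
    have hq : (MvPolynomial.aeval ![Polynomial.X, (1 : Polynomial (ZMod 2))])
        ((b1 + (4) * b1^2 + (5) * b1^3 + (4) * b1^4 + b1^5) * ((2) * b1^4 + (2) * b1^5 + b1^5 * k + (3) * b1^6 + (2) * b1^6 * k + b1^7 + (3) * b1^7 * k + b1^8 * k) * ((4) * b1^5 + (12) * b1^6 + (12) * b1^7 + (8) * b1^8 + (2) * b1^9 + (4) * b1^9 * k + b1^9 * k^2 + (2) * b1^10 * k + (2) * b1^10 * k^2 + b1^11 * k^2) * ((4) * b1^7 + (12) * b1^8 + (12) * b1^9 + (8) * b1^10 + (2) * b1^11 + (6) * b1^11 * k + (-2) * b1^11 * k^2 + (3) * b1^12 * k + (-1)*b1^13 * k^2 + (2) * b1^13 * k^3 + (-1)*b1^14 * k^2 + (2) * b1^14 * k^3) : MvPolynomial (Fin 2) (ZMod 2)) = Polynomial.X^27 + Polynomial.X^31 + Polynomial.X^32 + Polynomial.X^33 + Polynomial.X^37 + Polynomial.X^38 := by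
      simp only [b1, k, map_add, map_mul, map_pow, map_one, map_ofNat, map_neg,
        MvPolynomial.aeval_X, Matrix.cons_val_zero, Matrix.cons_val_one, Matrix.head_cons]
      linear_combination ((16) * Polynomial.X^17 + (184) * Polynomial.X^18 + (984) * Polynomial.X^19 + (3344) * Polynomial.X^20 + (8268) * Polynomial.X^21 + (15966) * Polynomial.X^22 + (25074) * Polynomial.X^23 + (32934) * Polynomial.X^24 + (37018) * Polynomial.X^25 + (36288) * Polynomial.X^26 + (31463) * Polynomial.X^27 + (24326) * Polynomial.X^28 + (16825) * Polynomial.X^29 + (10430) * Polynomial.X^30 + (5803) * Polynomial.X^31 + (2891) * Polynomial.X^32 + (1280) * Polynomial.X^33 + (496) * Polynomial.X^34 + (161) * Polynomial.X^35 + (40) * Polynomial.X^36 + (6) * Polynomial.X^37) * h2p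
    rw [h0, map_zero] at hq
    have hcoeff := congrArg (fun p => Polynomial.coeff p 38) hq
    simp [Polynomial.coeff_X_pow] at hcoeff
  have hdet : Msyl.det = ((4) * b1^9 + (12) * b1^10 + (12) * b1^11 + (12) * b1^11 * k + (8) * b1^12 + (12) * b1^12 * k + (2) * b1^13 + (16) * b1^13 * k + (-4) * b1^13 * k^2 + (6) * b1^14 * k + (12) * b1^14 * k^2 + (12) * b1^15 * k^2 + (-8) * b1^15 * k^3 + (4) * b1^16 * k^2 + (-8) * b1^16 * k^3 + b1^17 * k^2 + (-4) * b1^17 * k^3 + (4) * b1^17 * k^4) := by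
    have h1 : ((b1 + (4) * b1^2 + (5) * b1^3 + (4) * b1^4 + b1^5) * ((2) * b1^4 + (2) * b1^5 + b1^5 * k + (3) * b1^6 + (2) * b1^6 * k + b1^7 + (3) * b1^7 * k + b1^8 * k) * ((4) * b1^5 + (12) * b1^6 + (12) * b1^7 + (8) * b1^8 + (2) * b1^9 + (4) * b1^9 * k + b1^9 * k^2 + (2) * b1^10 * k + (2) * b1^10 * k^2 + b1^11 * k^2) * ((4) * b1^7 + (12) * b1^8 + (12) * b1^9 + (8) * b1^10 + (2) * b1^11 + (6) * b1^11 * k + (-2) * b1^11 * k^2 + (3) * b1^12 * k + (-1)*b1^13 * k^2 + (2) * b1^13 * k^3 + (-1)*b1^14 * k^2 + (2) * b1^14 * k^3) : MvPolynomial (Fin 2) (ZMod 2)) * Msyl.det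
        = ((b1 + (4) * b1^2 + (5) * b1^3 + (4) * b1^4 + b1^5) * ((2) * b1^4 + (2) * b1^5 + b1^5 * k + (3) * b1^6 + (2) * b1^6 * k + b1^7 + (3) * b1^7 * k + b1^8 * k) * ((4) * b1^5 + (12) * b1^6 + (12) * b1^7 + (8) * b1^8 + (2) * b1^9 + (4) * b1^9 * k + b1^9 * k^2 + (2) * b1^10 * k + (2) * b1^10 * k^2 + b1^11 * k^2) * ((4) * b1^7 + (12) * b1^8 + (12) * b1^9 + (8) * b1^10 + (2) * b1^11 + (6) * b1^11 * k + (-2) * b1^11 * k^2 + (3) * b1^12 * k + (-1)*b1^13 * k^2 + (2) * b1^13 * k^3 + (-1)*b1^14 * k^2 + (2) * b1^14 * k^3)) * ((4) * b1^9 + (12) * b1^10 + (12) * b1^11 + (12) * b1^11 * k + (8) * b1^12 + (12) * b1^12 * k + (2) * b1^13 + (16) * b1^13 * k + (-4) * b1^13 * k^2 + (6) * b1^14 * k + (12) * b1^14 * k^2 + (12) * b1^15 * k^2 + (-8) * b1^15 * k^3 + (4) * b1^16 * k^2 + (-8) * b1^16 * k^3 + b1^17 * k^2 + (-4) * b1^17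 * k^3 + (4) * b1^17 * k^4) := by linear_combination hmul
    exact mul_left_cancel₀ hdl h1
  rw [hA, hdet]
  linear_combination ((2) * b1^9 + (6) * b1^10 + (6) * b1^11 + (6) * b1^11 * k + (4) * b1^12 + (6) * b1^12 * k + b1^13 + (8) * b1^13 * k + (-2) * b1^13 * k^2 + (3) * b1^14 * k + (6) * b1^14 * k^2 + (6) * b1^15 * k^2 + (-4) * b1^15 * k^3 + (2) * b1^16 * k^2 + (-4) * b1^16 * k^3 + (-2) * b1^17 * k^3 + (2) * b1^17 * k^4) * h2
end

section
/- Let q be even, a ∈ F_q^*, b = a ∈ F_q^*, and k ∈ F_q with Tr_{q/2}(k) = 1. For y ∈ F_q, the equation x^4 + a^2 x^2 + a^2 x + (k + ak + k^2 + y)^2 = 0 has a unique solution x ∈ F_q for every y ∈ F_q if and only if X^3 + X + 1/a has no root in F_q. -/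
theorem unique_root_quartic_iff_no_root_cubic (F : Type*) [Field F] [Fintype F]
    [Algebra (ZMod 2) F] (h2 : ringChar F = 2)
    (a : F) (ha : a ≠ 0) (k : F) (hk : Algebra.trace (ZMod 2) F k = 1) :
    (∀ y : F, ∃! x : F,
        x ^ 4 + a ^ 2 * x ^ 2 + a ^ 2 * x + (k + a * k + k ^ 2 + y) ^ 2 = 0) ↔
      ∀ x : F, x ^ 3 + x + 1 / a ≠ 0 := by
  haveI hchar : CharP F 2 := by rw [← h2]; exact ringChar.charP F
  have hself : ∀ z : F, z + z = 0 := fun z => CharTwo.add_self_eq_zero z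
  have h2z : (2 : F) = 0 := by exact_mod_cast CharP.cast_eq_zero F 2
  have hneg : ∀ z : F, -z = z := fun z => CharTwo.neg_eq z
  -- squaring is surjective
  have hsq : Function.Surjective (fun x : F => x ^ 2) := by
    rw [← Finite.injective_iff_surjective]
    intro x y h
    simp only at h
    have h0 : (x + y) ^ 2 = 0 := by rw [CharTwo.add_sq, h, hself]
    have := pow_eq_zero_iff (two_ne_zero) |>.mp h0
    have : x = -y := by linear_combination this
    rwa [hneg] at this
  set φ : F → F := fun x => x ^ 4 + a ^ 2 * x ^ 2 + a ^ 2 * x with hφ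
  have hadd : ∀ x y : F, φ (x + y) = φ x + φ y := by
    intro x y
    simp only [hφ]
    have h4 : (x + y) ^ 4 = x ^ 4 + y ^ 4 := by
      rw [show (4:ℕ) = 2 * 2 by norm_num, pow_mul, CharTwo.add_sq, CharTwo.add_sq,
        ← pow_mul, ← pow_mul]
    rw [h4, CharTwo.add_sq]
    ring
  -- step 1: LHS ↔ ∀ c, ∃! x, φ x = c
  have step1 : (∀ y : F, ∃! x : F,
        x ^ 4 + a ^ 2 * x ^ 2 + a ^ 2 * x + (k + a * k + k ^ 2 + y) ^ 2 = 0) ↔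
      ∀ c : F, ∃! x : F, φ x = c := by
    constructor
    · intro H c
      obtain ⟨t, ht⟩ := hsq c
      simp only at ht
      have := H (t + (k + a * k + k ^ 2))
      have hc : (k + a * k + k ^ 2 + (t + (k + a * k + k ^ 2))) ^ 2 = c := by
        rw [show k + a * k + k ^ 2 + (t + (k + a * k + k ^ 2)) = t by
          linear_combination hself (k + a * k + k ^ 2)]
        exact ht
      rw [hc] at this
      obtain ⟨x, hx, hu⟩ := this
      refine ⟨x, ?_, fun z hz => hu z ?_⟩
      · have : φ x = -c := by linear_combination hx
        rwa [hneg] at this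
      · simp only [hφ] at hz ⊢
        linear_combination hz + c * h2z
    · intro H y
      obtain ⟨x, hx, hu⟩ := H ((k + a * k + k ^ 2 + y) ^ 2)
      refine ⟨x, ?_, fun z hz => hu z ?_⟩
      · simp only [hφ] at hx; linear_combination hx + (k + a * k + k ^ 2 + y) ^ 2 * h2z
      · simp only [hφ] at hz ⊢
        linear_combination hz - (k + a * k + k ^ 2 + y) ^ 2 * h2z
  rw [step1, ← Function.bijective_iff_existsUnique, ← Finite.injective_iff_bijective]
  -- step 2: injective ↔ cubic x^3 + a^2 x + a^2 has no root
  have step2 : Function.Injective φ ↔ ∀ x : F, x ^ 3 + a ^ 2 * x + a ^ 2 ≠ 0 := by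
    constructor
    · intro H r hr
      have hr0 : r ≠ 0 := by
        rintro rfl
        simp at hr
        exact ha hr
      have : φ r = φ 0 := by
        simp only [hφ]
        have : r ^ 4 + a ^ 2 * r ^ 2 + a ^ 2 * r = r * (r ^ 3 + a ^ 2 * r + a ^ 2) := by ring
        rw [this, hr, mul_zero]; ring
      exact hr0 (H this)
    · intro H x y hxy
      have h0 : φ (x + y) = 0 := by
        rw [hadd, hxy, hself]
      simp only [hφ] at h0
      have hfac : (x + y) * ((x + y) ^ 3 + a ^ 2 * (x + y) + a ^ 2) = 0 := by
        linear_combination h0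
      rcases mul_eq_zero.mp hfac with h | h
      · have : x = -y := by linear_combination h
        rwa [hneg] at this
      · exact absurd h (H (x + y))
  rw [step2]
  -- step 3: substitution x ↦ x / a
  constructor
  · intro H s hs
    refine H (a * s) ?_
    have : (a * s) ^ 3 + a ^ 2 * (a * s) + a ^ 2 = a ^ 3 * (s ^ 3 + s + 1 / a) := by
      field_simp
    rw [this, hs, mul_zero]
  · intro H r hr
    refine H (r / a) ?_
    have : (r / a) ^ 3 + (r / a) + 1 / a = (r ^ 3 + a ^ 2 * r + a ^ 2) / a ^ 3 := by
      field_simp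
    rw [this, hr, zero_div]
end
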